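/- The first homology group of the moduli space X_2^m of m-colored one-loop graphs with 2 legs is free abelian of rank (m-1)(m-2)/2, and satisfies the recursion H_1(X_2^m) ≅ H_1(X_2^{m-1}) ⊕ Z^{m-2} for m ≥ 2. -/

import Mathlib

/-- Vertices of the 1-dimensional CW-complex `X_2^m` (the moduli space of
`m`-colored one-loop graphs with 2 legs): `m` roses `r_i`, `m` monochromatic
banana graphs `b_i`, and for each unordered pair `i < j` of colors the midpoint
of the arc `β_{ij}` (the banana with edges colored `i` and `j` of equal length). -/
def VertX2 (m : ℕ) : Type :=
  Fin m ⊕ Fin m ⊕ {p : Fin m × Fin m // p.1 < p.2}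

/-- Edges of `X_2^m`: the arcs `β_i` joining `b_i` to `r_i`, and for each pair
`i < j` the two 1-cubes of the arc `β_{ij}`, joining `r_i` (resp. `r_j`) to the
midpoint. -/
def EdgeX2 (m : ℕ) : Type :=
  Fin m ⊕ ({p : Fin m × Fin m // p.1 < p.2} × Bool)


instance (m : ℕ) : DecidableEq (VertX2 m) :=
  inferInstanceAs (DecidableEq (Fin m ⊕ Fin m ⊕ {p : Fin m × Fin m // p.1 < p.2}))

instance (m : ℕ) : Fintype (VertX2 m) :=
  inferInstanceAs (Fintype (Fin m ⊕ Fin m ⊕ {p : Fin m × Fin m // p.1 < p.2}))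

instance (m : ℕ) : DecidableEq (EdgeX2 m) :=
  inferInstanceAs (DecidableEq (Fin m ⊕ ({p : Fin m × Fin m // p.1 < p.2} × Bool)))

instance (m : ℕ) : Fintype (EdgeX2 m) :=
  inferInstanceAs (Fintype (Fin m ⊕ ({p : Fin m × Fin m // p.1 < p.2} × Bool)))

/-- The two endpoints of each edge of `X_2^m`. -/
def endsX2 (m : ℕ) : EdgeX2 m → VertX2 m × VertX2 m
  | Sum.inl i => (Sum.inr (Sum.inl i), Sum.inl i)
  | Sum.inr (p, b) => (Sum.inl (if b then p.1.1 else p.1.2), Sum.inr (Sum.inr p))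

/-- The simplicial boundary matrix of the 1-complex `X_2^m`. -/
def boundaryX2 (m : ℕ) : Matrix (VertX2 m) (EdgeX2 m) ℤ :=
  Matrix.of fun v e =>
    (if v = (endsX2 m e).2 then 1 else 0) - (if v = (endsX2 m e).1 then 1 else 0)

/-- The first homology of `X_2^m` (kernel of the boundary map of the
1-complex). -/
def H1X2 (m : ℕ) : Submodule ℤ (EdgeX2 m → ℤ) :=
  LinearMap.ker (boundaryX2 m).mulVecLin


abbrev PairX (m : ℕ) := {p : Fin m × Fin m // p.1 < p.2}

abbrev Pm (m : ℕ) := {p : Fin m × Fin m // p.1 < p.2 ∧ (p.1.1 : ℕ) ≠ 0}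

lemma boundaryX2_apply (m : ℕ) (v : Fin m ⊕ Fin m ⊕ {p : Fin m × Fin m // p.1 < p.2})
    (e : Fin m ⊕ ({p : Fin m × Fin m // p.1 < p.2} × Bool)) : boundaryX2 m v e =
    @ite ℤ (@Eq (VertX2 m) v (endsX2 m e).2) (instDecidableEqVertX2 m v (endsX2 m e).2) 1 0
      - @ite ℤ (@Eq (VertX2 m) v (endsX2 m e).1) (instDecidableEqVertX2 m v (endsX2 m e).1) 1 0 := rfl

lemma mem_H1X2 {m : ℕ} {x : EdgeX2 m → ℤ} :
    x ∈ H1X2 m ↔ ∀ v : VertX2 m, ∑ e : EdgeX2 m, boundaryX2 m v e * x e = 0 := by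
  simp [H1X2, LinearMap.mem_ker, Matrix.mulVecLin_apply, funext_iff,
    Matrix.mulVec, dotProduct]

lemma sum_edge {m : ℕ} (f : EdgeX2 m → ℤ) :
    ∑ e : EdgeX2 m, f e
      = (∑ i : Fin m, f (Sum.inl i))
        + ∑ q : PairX m, (f (Sum.inr (q, true)) + f (Sum.inr (q, false))) := by
  rw [show (∑ e : EdgeX2 m, f e)
      = ∑ e : Fin m ⊕ (PairX m × Bool), f e from rfl]
  erw [Fintype.sum_sum_type]
  congr 1
  rw [Fintype.sum_prod_type]
  exact Finset.sum_congr rfl fun q _ => by rw [Fintype.sum_bool]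

lemma sum_pair {m : ℕ} (G : Fin m × Fin m → ℤ) (hG : ∀ p, ¬ p.1 < p.2 → G p = 0) :
    ∑ q : PairX m, G q.1 = ∑ p : Fin m × Fin m, G p := by
  rw [← Finset.sum_subtype (Finset.univ.filter fun p : Fin m × Fin m => p.1 < p.2)
      (by simp) G]
  rw [Finset.sum_filter]
  exact Finset.sum_congr rfl fun p _ => by
    by_cases h : p.1 < p.2 <;> simp [h, hG]

lemma hA {m : ℕ} {x : EdgeX2 m → ℤ} (hx : x ∈ H1X2 m) (i : Fin m) :
    x (Sum.inl i) = 0 := by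
  have h := mem_H1X2.mp hx (Sum.inr (Sum.inl i))
  rw [sum_edge] at h
  simp [boundaryX2_apply, endsX2, VertX2] at h
  exact h

lemma hB {m : ℕ} {x : EdgeX2 m → ℤ} (hx : x ∈ H1X2 m) (q : PairX m) :
    x (Sum.inr (q, false)) = - x (Sum.inr (q, true)) := by
  have h := mem_H1X2.mp hx (Sum.inr (Sum.inr q))
  rw [sum_edge] at h
  simp [boundaryX2_apply, endsX2, VertX2] at h
  rw [Finset.sum_add_distrib] at h
  simp [Finset.sum_ite_eq] at h
  linarith [h]

lemma rose_eq {m : ℕ} {x : EdgeX2 m → ℤ} (hx : x ∈ H1X2 m) (j : Fin m) :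
    ∑ q : PairX m, ((if j = q.1.2 then (1:ℤ) else 0) - if j = q.1.1 then 1 else 0)
        * x (Sum.inr (q, true)) = 0 := by
  have h := mem_H1X2.mp hx (Sum.inl j)
  rw [sum_edge] at h
  simp [boundaryX2_apply, endsX2, VertX2, hA hx] at h
  calc ∑ q : PairX m, ((if j = q.1.2 then (1:ℤ) else 0) - if j = q.1.1 then 1 else 0)
        * x (Sum.inr (q, true))
      = ∑ q : PairX m, ((-if j = q.1.1 then x (Sum.inr (q, true)) else 0)
          + -if j = q.1.2 then x (Sum.inr (q, false)) else 0) := by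
        refine Finset.sum_congr rfl fun q _ => ?_
        rw [hB hx q]
        split_ifs <;> ring
    _ = 0 := h


lemma keyC {m : ℕ} {x : EdgeX2 m → ℤ} (hx : x ∈ H1X2 m)
    (hz : ∀ q : Pm m, x (Sum.inr (⟨q.1, q.2.1⟩, true)) = 0) (q : PairX m) :
    x (Sum.inr (q, true)) = 0 := by
  by_cases h0 : (q.1.1.1 : ℕ) ≠ 0
  · exact hz ⟨q.1, q.2, h0⟩
  · push_neg at h0
    have hlt : (q.1.1.1 : ℕ) < (q.1.2.1 : ℕ) := q.2
    have h := rose_eq hx q.1.2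
    rw [Finset.sum_eq_single q ?_ ?_] at h
    · rw [if_pos rfl, if_neg (by intro hj; rw [hj] at hlt; omega)] at h
      linarith [h]
    · intro q' _ hne
      by_cases e1 : q.1.2 = q'.1.1
      · have : x (Sum.inr (q', true)) = 0 := by
          refine hz ⟨q'.1, q'.2, ?_⟩
          rw [← e1]; omega
        rw [this, mul_zero]
      · by_cases e2 : q.1.2 = q'.1.2
        · by_cases h0' : (q'.1.1.1 : ℕ) ≠ 0
          · rw [hz ⟨q'.1, q'.2, h0'⟩, mul_zero]
          · push_neg at h0'
            exfalso
            apply hne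
            refine Subtype.ext (Prod.ext (Fin.ext ?_) (Fin.ext ?_))
            · omega
            · rw [← e2]
        · rw [if_neg e2, if_neg e1, sub_zero, zero_mul]
    · intro habs; exact absurd (Finset.mem_univ q) habs

lemma hC {m : ℕ} {x : EdgeX2 m → ℤ} (hx : x ∈ H1X2 m)
    (hz : ∀ q : Pm m, x (Sum.inr (⟨q.1, q.2.1⟩, true)) = 0) : x = 0 := by
  have key : ∀ e : Fin m ⊕ (PairX m × Bool), x e = 0 := by
    rintro (i | ⟨q, b⟩)
    · exact hA hx i
    · cases b
      · rw [hB hx q, keyC hx hz q, neg_zero]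
      · exact keyC hx hz q
  funext e
  exact key e

----------------------------------------------------------------------
-- the inverse construction
----------------------------------------------------------------------

def zfull (m : ℕ) (z : Pm m → ℤ) (p : Fin m × Fin m) : ℤ :=
  if h : p.1 < p.2 ∧ (p.1.1 : ℕ) ≠ 0 then z ⟨p, h⟩ else 0

def wfull (m : ℕ) (z : Pm m → ℤ) (j : Fin m) : ℤ :=
  (∑ p : Fin m × Fin m, if j = p.1 then zfull m z p else 0)
  - ∑ p : Fin m × Fin m, if j = p.2 then zfull m z p else 0

def yfull (m : ℕ) (z : Pm m → ℤ) (p : Fin m × Fin m) : ℤ :=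
  zfull m z p + if ((p.1.1 : ℕ) = 0 ∧ p.1 < p.2) then wfull m z p.2 else 0

def psiF (m : ℕ) (z : Pm m → ℤ) : EdgeX2 m → ℤ
  | Sum.inl _ => 0
  | Sum.inr (q, b) => if b then yfull m z q.1 else - yfull m z q.1

lemma yfull_apply {m : ℕ} (z : Pm m → ℤ) (q : Pm m) : yfull m z q.1 = z q := by
  unfold yfull zfull
  rw [if_neg (by intro hcon; exact q.2.2 hcon.1), dif_pos q.2, add_zero]

lemma yfull_of_not_lt {m : ℕ} (z : Pm m → ℤ) {p : Fin m × Fin m} (hp : ¬ p.1 < p.2) :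
    yfull m z p = 0 := by
  unfold yfull zfull
  rw [dif_neg (by intro hcon; exact hp hcon.1), if_neg (by intro hcon; exact hp hcon.2),
    add_zero]

lemma wfull_total (m : ℕ) (z : Pm m → ℤ) : ∑ j : Fin m, wfull m z j = 0 := by
  unfold wfull
  rw [Finset.sum_sub_distrib]
  have h1 : ∑ j : Fin m, ∑ p : Fin m × Fin m, (if j = p.1 then zfull m z p else 0)
      = ∑ p : Fin m × Fin m, zfull m z p := by
    rw [Finset.sum_comm]
    exact Finset.sum_congr rfl fun p _ => by simp
  have h2 : ∑ j : Fin m, ∑ p : Fin m × Fin m, (if j = p.2 then zfull m z p else 0)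
      = ∑ p : Fin m × Fin m, zfull m z p := by
    rw [Finset.sum_comm]
    exact Finset.sum_congr rfl fun p _ => by simp
  rw [h1, h2, sub_self]

def Gaux (m : ℕ) (z : Pm m → ℤ) (p : Fin m × Fin m) : ℤ :=
  if ((p.1.1 : ℕ) = 0 ∧ p.1 < p.2) then wfull m z p.2 else 0

lemma divergence_zero (m : ℕ) (z : Pm m → ℤ) (i : Fin m) :
    ∑ p : Fin m × Fin m,
      ((if i = p.2 then (1:ℤ) else 0) - if i = p.1 then 1 else 0) * yfull m z p = 0 := by
  have expand : ∀ p : Fin m × Fin m,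
      ((if i = p.2 then (1:ℤ) else 0) - if i = p.1 then 1 else 0) * yfull m z p
      = (((if i = p.2 then zfull m z p else 0) - if i = p.1 then zfull m z p else 0))
        + ((if i = p.2 then Gaux m z p else 0) - if i = p.1 then Gaux m z p else 0) := by
    intro p
    unfold yfull Gaux
    split_ifs <;> ring
  rw [Finset.sum_congr rfl fun p _ => expand p, Finset.sum_add_distrib,
    Finset.sum_sub_distrib, Finset.sum_sub_distrib]
  have hw : (∑ p : Fin m × Fin m, if i = p.1 then zfull m z p else 0)
      - (∑ p : Fin m × Fin m, if i = p.2 then zfull m z p else 0) = wfull m z i := rfl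
  have hQ : (∑ p : Fin m × Fin m, if i = p.2 then Gaux m z p else 0)
      - (∑ p : Fin m × Fin m, if i = p.1 then Gaux m z p else 0) = wfull m z i := by
    by_cases h0 : (i : ℕ) = 0
    · have hQ1 : (∑ p : Fin m × Fin m, if i = p.2 then Gaux m z p else 0) = 0 := by
        refine Finset.sum_eq_zero fun p _ => ?_
        unfold Gaux
        by_cases h2 : i = p.2
        · rw [if_pos h2, if_neg]
          rintro ⟨-, hcon⟩
          have : (p.1.1 : ℕ) < (p.2.1 : ℕ) := hcon
          rw [← h2] at this
          omega
        · rw [if_neg h2]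
      have hQ2 : (∑ p : Fin m × Fin m, if i = p.1 then Gaux m z p else 0)
          = - wfull m z i := by
        rw [Fintype.sum_prod_type, Finset.sum_comm]
        have step1 : ∀ b : Fin m,
            (∑ a : Fin m, if i = a then Gaux m z (a, b) else 0) = Gaux m z (i, b) := by
          intro b; simp
        rw [Finset.sum_congr rfl fun b _ => step1 b]
        have step2 : ∀ b : Fin m,
            Gaux m z (i, b) = wfull m z b - (if b = i then wfull m z b else 0) := by
          intro b
          unfold Gaux
          by_cases hbi : b = i
          · subst hbi
            rw [if_pos rfl, sub_self, if_neg]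
            rintro ⟨-, hcon⟩
            exact absurd hcon (lt_irrefl b)
          · have hvne : (b : ℕ) ≠ (i : ℕ) := by simpa [Fin.ext_iff] using hbi
            have hib : i < b := by rw [Fin.lt_def]; omega
            rw [if_pos ⟨h0, hib⟩, if_neg hbi, sub_zero]
        rw [Finset.sum_congr rfl fun b _ => step2 b, Finset.sum_sub_distrib, wfull_total]
        simp
      rw [hQ1, hQ2]
      ring
    · have hQ2 : (∑ p : Fin m × Fin m, if i = p.1 then Gaux m z p else 0) = 0 := by
        refine Finset.sum_eq_zero fun p _ => ?_
        unfold Gaux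
        by_cases h1 : i = p.1
        · rw [if_pos h1, if_neg]
          rintro ⟨hcon, -⟩
          rw [← h1] at hcon
          exact h0 hcon
        · rw [if_neg h1]
      have hQ1 : (∑ p : Fin m × Fin m, if i = p.2 then Gaux m z p else 0)
          = wfull m z i := by
        rw [Fintype.sum_prod_type]
        have step1 : ∀ a : Fin m,
            (∑ b : Fin m, if i = b then Gaux m z (a, b) else 0) = Gaux m z (a, i) := by
          intro a; simp
        rw [Finset.sum_congr rfl fun a _ => step1 a]
        have hm0 : 0 < m := i.pos
        rw [Finset.sum_eq_single (⟨0, hm0⟩ : Fin m) ?_ ?_]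
        · unfold Gaux
          rw [if_pos]
          exact ⟨rfl, by show (0 : ℕ) < (i : ℕ); omega⟩
        · intro a _ hne
          unfold Gaux
          rw [if_neg]
          rintro ⟨hcon, -⟩
          exact hne (Fin.ext hcon)
        · intro habs; exact absurd (Finset.mem_univ _) habs
      rw [hQ1, hQ2]
      ring
  linarith [hw, hQ]

lemma psiF_mem (m : ℕ) (z : Pm m → ℤ) : psiF m z ∈ H1X2 m := by
  rw [mem_H1X2]
  intro v
  rw [sum_edge]
  rcases v with i | i | q
  · -- rose
    simp [boundaryX2_apply, endsX2, VertX2, psiF]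
    refine Eq.trans (Finset.sum_congr rfl fun q _ => ?_)
      (Eq.trans (sum_pair
        (fun p => ((if i = p.2 then (1:ℤ) else 0) - if i = p.1 then 1 else 0) * yfull m z p)
        fun p hp => by simp [yfull_of_not_lt z hp]) (divergence_zero m z i))
    have hne : (q : Fin m × Fin m).1 ≠ (q : Fin m × Fin m).2 := ne_of_lt q.2
    have hne' : (q : Fin m × Fin m).2 ≠ (q : Fin m × Fin m).1 := hne.symm
    by_cases h1 : i = (q : Fin m × Fin m).1 <;> by_cases h2 : i = (q : Fin m × Fin m).2 <;>
      simp [h1, h2, hne, hne'] <;> ring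
  · -- banana
    simp [boundaryX2_apply, endsX2, VertX2, psiF]
  · -- midpoint
    simp [boundaryX2_apply, endsX2, VertX2, psiF]

----------------------------------------------------------------------
-- the linear equivalence
----------------------------------------------------------------------

def phiH (m : ℕ) : (EdgeX2 m → ℤ) →ₗ[ℤ] (Pm m → ℤ) :=
  LinearMap.funLeft ℤ ℤ fun q : Pm m => (Sum.inr (⟨q.1, q.2.1⟩, true) : EdgeX2 m)

def homH (m : ℕ) : H1X2 m →ₗ[ℤ] (Pm m → ℤ) := (phiH m).comp (H1X2 m).subtype

lemma homH_bij (m : ℕ) : Function.Bijective (homH m) := by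
  constructor
  · rw [← LinearMap.ker_eq_bot, LinearMap.ker_eq_bot']
    rintro ⟨x, hx⟩ hfx
    refine Subtype.ext (hC hx fun q => ?_)
    exact congrFun hfx q
  · intro z
    refine ⟨⟨psiF m z, psiF_mem m z⟩, funext fun q => ?_⟩
    show psiF m z (Sum.inr (⟨q.1, q.2.1⟩, true)) = z q
    show yfull m z q.1 = z q
    exact yfull_apply z q

noncomputable def eqvH (m : ℕ) : H1X2 m ≃ₗ[ℤ] (Pm m → ℤ) :=
  LinearEquiv.ofBijective (homH m) (homH_bij m)

----------------------------------------------------------------------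
-- cardinalities
----------------------------------------------------------------------

def pairEquivSigma (n : ℕ) : PairX n ≃ Σ j : Fin n, Fin j.val where
  toFun q := ⟨q.1.2, ⟨q.1.1.val, q.2⟩⟩
  invFun s := ⟨(⟨s.2.val, s.2.isLt.trans s.1.isLt⟩, s.1), s.2.isLt⟩
  left_inv q := rfl
  right_inv s := rfl

lemma card_pairX (n : ℕ) : Fintype.card (PairX n) = n * (n - 1) / 2 := by
  rw [Fintype.card_congr (pairEquivSigma n), Fintype.card_sigma]
  simp only [Fintype.card_fin]
  rw [show (∑ x : Fin n, (x : ℕ)) = ∑ i ∈ Finset.range n, i from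
    Fin.sum_univ_eq_sum_range (fun i => i) n, Finset.sum_range_id]

def pmEquiv (m : ℕ) : Pm m ≃ PairX (m - 1) where
  toFun q :=
    ⟨(⟨q.1.1.val - 1, by
        have h1 : q.1.1.val < q.1.2.val := q.2.1
        have h2 : q.1.2.val < m := q.1.2.isLt
        have h3 : q.1.1.val ≠ 0 := q.2.2
        omega⟩,
      ⟨q.1.2.val - 1, by
        have h2 : q.1.2.val < m := q.1.2.isLt
        have h1 : q.1.1.val < q.1.2.val := q.2.1
        omega⟩), by
      show q.1.1.val - 1 < q.1.2.val - 1
      have h1 : q.1.1.val < q.1.2.val := q.2.1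
      have h3 : q.1.1.val ≠ 0 := q.2.2
      omega⟩
  invFun p :=
    ⟨(⟨p.1.1.val + 1, by have := p.1.1.isLt; omega⟩,
      ⟨p.1.2.val + 1, by have := p.1.2.isLt; omega⟩), by
      constructor
      · show p.1.1.val + 1 < p.1.2.val + 1
        have : p.1.1.val < p.1.2.val := p.2
        omega
      · exact Nat.succ_ne_zero _⟩
  left_inv q := by
    apply Subtype.ext
    apply Prod.ext <;> apply Fin.ext <;>
      simp <;> [have h3 : q.1.1.val ≠ 0 := q.2.2; have h1 : q.1.1.val < q.1.2.val := q.2.1] <;>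
      omega
  right_inv p := by
    apply Subtype.ext
    apply Prod.ext <;> apply Fin.ext <;> simp

lemma card_pm (m : ℕ) : Fintype.card (Pm m) = (m - 1) * (m - 2) / 2 := by
  rw [Fintype.card_congr (pmEquiv m), card_pairX]
  have : m - 1 - 1 = m - 2 := by omega
  rw [this]

lemma tri_rec {m : ℕ} (hm : 2 ≤ m) :
    (m - 1) * (m - 2) / 2 = (m - 2) * (m - 3) / 2 + (m - 2) := by
  obtain ⟨k, rfl⟩ : ∃ k, m = k + 2 := ⟨m - 2, by omega⟩
  show (k + 1) * k / 2 = k * (k - 1) / 2 + k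
  cases k with
  | zero => rfl
  | succ n =>
    show (n + 2) * (n + 1) / 2 = (n + 1) * n / 2 + (n + 1)
    rw [show (n + 2) * (n + 1) = (n + 1) * n + 2 * (n + 1) by ring,
      Nat.add_mul_div_left _ _ (by norm_num : 0 < 2)]

def sumLequiv (α β : Type*) : ((α ⊕ β) → ℤ) ≃ₗ[ℤ] (α → ℤ) × (β → ℤ) :=
  { Equiv.sumArrowEquivProdArrow α β ℤ with
    map_add' := fun f g => rfl
    map_smul' := fun c f => rfl }

/-- `H_1(X_2^m)` is free abelian of rank `(m-1)(m-2)/2`, and for `m ≥ 2` it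
satisfies the recursion `H_1(X_2^m) ≅ H_1(X_2^{m-1}) ⊕ ℤ^{m-2}`. -/
theorem first_homology_X2 (m : ℕ) :
    Module.Free ℤ (H1X2 m) ∧
    Module.finrank ℤ (H1X2 m) = (m - 1) * (m - 2) / 2 ∧
    (2 ≤ m → Nonempty ((H1X2 m) ≃ₗ[ℤ] (H1X2 (m - 1)) × (Fin (m - 2) → ℤ))) := by
  refine ⟨Module.Free.of_equiv (eqvH m).symm, ?_, ?_⟩
  · rw [(eqvH m).finrank_eq, Module.finrank_fintype_fun_eq_card, card_pm]
  · intro hm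
    have hcard : Fintype.card (Pm m) = Fintype.card (Pm (m - 1) ⊕ Fin (m - 2)) := by
      rw [card_pm, Fintype.card_sum, card_pm, Fintype.card_fin]
      have e1 : m - 1 - 1 = m - 2 := by omega
      have e2 : m - 1 - 2 = m - 3 := by omega
      rw [e1, e2]
      exact tri_rec hm
    have E : Pm m ≃ (Pm (m - 1)) ⊕ (Fin (m - 2)) := Fintype.equivOfCardEq hcard
    exact ⟨(eqvH m).trans ((LinearEquiv.funCongrLeft ℤ ℤ E.symm).trans
      ((sumLequiv (Pm (m - 1)) (Fin (m - 2))).trans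
        (LinearEquiv.prodCongr (eqvH (m - 1)).symm (LinearEquiv.refl ℤ (Fin (m - 2) → ℤ)))))⟩
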